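/- Let X be a set with d elements (admitting a surjection from Fin d) and let α be a relation on X. Writing α^{*n} for the n-fold filled power (α^{*1} = α, α^{*(n+1)} = α * α^{*n}), one has α ∩ α^{*2} ∩ ⋯ ∩ α^{*(d+2)} ⊆ α^{*(n+1)} for all natural numbers n; consequently α ∩ α^{*2} ∩ ⋯ ∩ α^{*(d+2)} equals the intersection of all filled powers of α. -/

import Mathlib

/-- The filled product of relations. -/
def filledProd {X : Type*} (α β : X → X → Prop) : X → X → Prop :=
  fun x y => ∀ z, α x z ∨ β z y

/-- `filledPow α n` is the `(n+1)`-st filled power `α^{*(n+1)}` of `α`. -/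
def filledPow {X : Type*} (α : X → X → Prop) : ℕ → (X → X → Prop)
  | 0 => α
  | n + 1 => filledProd α (filledPow α n)

/-- Characterization of filled powers via paths. -/
lemma filledPow_iff_paths {X : Type*} (α : X → X → Prop) :
    ∀ (n : ℕ) (x y : X), filledPow α n x y ↔
      ∀ g : ℕ → X, g 0 = x → g (n + 1) = y → ∃ i ≤ n, α (g i) (g (i + 1)) := by
  intro n
  induction n with
  | zero =>
    intro x y
    constructor
    · intro h g h0 h1
      refine ⟨0, le_refl 0, ?_⟩
      rw [h0, h1]; exact h
    · intro h
      obtain ⟨i, hi, ha⟩ := h (fun t => if t = 0 then x else y) rfl (by simp)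
      interval_cases i
      simpa [filledPow] using ha
  | succ n ih =>
    intro x y
    constructor
    · intro h g h0 h1
      rcases h (g 1) with hα | hp
      · exact ⟨0, by omega, by rw [h0]; exact hα⟩
      · obtain ⟨i, hi, ha⟩ := (ih (g 1) y).1 hp (fun t => g (t + 1)) rfl (by simpa using h1)
        exact ⟨i + 1, by omega, by simpa using ha⟩
    · intro h z
      by_cases hα : α x z
      · exact Or.inl hα
      · right
        rw [ih]
        intro g' h0 h1
        obtain ⟨i, hi, ha⟩ := h (fun t => if t = 0 then x else g' (t - 1)) rfl (by simp [h1])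
        match i with
        | 0 =>
          norm_num at ha
          rw [h0] at ha
          exact absurd ha hα
        | k + 1 =>
          refine ⟨k, by omega, ?_⟩
          simp only [if_neg (Nat.succ_ne_zero k), if_neg (Nat.succ_ne_zero (k+1)),
            Nat.add_sub_cancel] at ha
          exact ha

theorem finite_intersection_of_filled_powers
    {X : Type*} (d : ℕ) (f : Fin d → X) (hf : Function.Surjective f)
    (α : X → X → Prop) :
    ∀ x y, (∀ k ≤ d + 1, filledPow α k x y) ↔ (∀ n, filledPow α n x y) := by
  intro x y
  constructor
  · intro H n
    induction n using Nat.strong_induction_on with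
    | _ n IH =>
      by_cases hn : n ≤ d + 1
      · exact H n hn
      · push_neg at hn
        rw [filledPow_iff_paths]
        intro g h0 h1
        by_contra hcon
        push_neg at hcon
        -- pigeonhole among g 0, ..., g n (n+1 > d values)
        have hinj : ∃ a b : Fin (n + 1), a ≠ b ∧ g a = g b := by
          have hcard : Fintype.card (Fin d) < Fintype.card (Fin (n + 1)) := by
            simp; omega
          obtain ⟨a, b, hab, heq⟩ := Fintype.exists_ne_map_eq_of_card_lt
            (fun k : Fin (n + 1) => Function.surjInv hf (g k)) hcard
          refine ⟨a, b, hab, ?_⟩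
          have := congrArg f heq
          rwa [Function.surjInv_eq hf, Function.surjInv_eq hf] at this
        obtain ⟨a, b, hab, heq⟩ := hinj
        -- wlog a < b
        obtain ⟨i, j, hij, hjn, hgij⟩ : ∃ i j : ℕ, i < j ∧ j ≤ n ∧ g i = g j := by
          rcases lt_or_gt_of_ne hab with h | h
          · exact ⟨a, b, Fin.lt_def.mp h, Nat.lt_succ_iff.mp b.isLt, heq⟩
          · exact ⟨b, a, Fin.lt_def.mp h, Nat.lt_succ_iff.mp a.isLt, heq.symm⟩
        set c := j - i with hc
        have hc1 : 1 ≤ c := by omega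
        -- shorter path of length n - c + 1
        have hshort : filledPow α (n - c) x y := IH (n - c) (by omega)
        rw [filledPow_iff_paths] at hshort
        obtain ⟨i', hi', ha'⟩ := hshort (fun t => if t ≤ i then g t else g (t + c))
          (by simp [h0]) (by
            have h2 : ¬ (n - c + 1 ≤ i) := by omega
            simp only [if_neg h2]
            have : n - c + 1 + c = n + 1 := by omega
            rw [this, h1])
        by_cases hcase : i' + 1 ≤ i
        · simp only [if_pos (by omega : i' ≤ i), if_pos hcase] at ha'
          exact hcon i' (by omega) ha'
        · by_cases hcase2 : i' ≤ i
          · -- i' = i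
            have hii : i' = i := by omega
            simp only [if_pos hcase2, if_neg hcase] at ha'
            rw [hii] at ha'
            have hji : i + 1 + c = j + 1 := by omega
            rw [hji, hgij] at ha'
            exact hcon j hjn ha'
          · simp only [if_neg hcase2, if_neg (by omega : ¬ i' + 1 ≤ i)] at ha'
            have : i' + 1 + c = i' + c + 1 := by omega
            rw [this] at ha'
            exact hcon (i' + c) (by omega) ha'
  · intro H k _
    exact H k
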